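/- Let (S, μ, η) be a monad on C equipped with a differential combinator transformation ∂, and define λ_A := ⟨S(π₁), S(π₁+π₄)∘∂_{A×A}⟩ : S(A×A) → S(A)×S(A). Then λ is compatible with the canonical flip of the biproduct tangent structure: ⟨π₁,π₃,π₂,π₄⟩∘(λ_A × λ_A)∘λ_{A×A} = (λ_A × λ_A)∘λ_{A×A}∘S(⟨π₁,π₃,π₂,π₄⟩) as morphisms S((A×A)×(A×A)) → (S(A)×S(A))×(S(A)×S(A)), where ⟨π₁,π₃,π₂,π₄⟩ denotes the transposition of the second and third coordinates of a fourfold biproduct. -/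
import Mathlib


open CategoryTheory CategoryTheory.Limits

universe v u

variable {C : Type u} [Category.{v} C] [Preadditive C] [HasBinaryBiproducts C]

/-- A differential combinator transformation on a monad `S`. -/
structure DiffCombTrans (S : Monad C) where
  d : ∀ A : C, S.obj A ⟶ S.obj (A ⊞ A)
  natural : ∀ {A B : C} (f : A ⟶ B), S.map f ≫ d B = d A ≫ S.map (biprod.map f f)
  dc1 : ∀ A : C, d A ≫ S.map biprod.fst = 0
  dc2 : ∀ A : C,
    d A ≫ S.map (biprod.lift biprod.fst (biprod.lift biprod.snd biprod.snd)) =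
      d A ≫ S.map (biprod.lift biprod.fst (biprod.lift biprod.snd 0)) +
      d A ≫ S.map (biprod.lift biprod.fst (biprod.lift 0 biprod.snd))
  dc3 : ∀ A : C, S.η.app A ≫ d A = biprod.lift 0 (𝟙 A) ≫ S.η.app (A ⊞ A)
  dc4 : ∀ A : C, S.μ.app A ≫ d A =
    d (S.obj A) ≫
      S.map (biprod.fst ≫ S.map (biprod.lift (𝟙 A) 0) + biprod.snd ≫ d A) ≫
      S.μ.app (A ⊞ A)
  dc5 : ∀ A : C, d A ≫ d (A ⊞ A) ≫
      S.map (biprod.lift (biprod.fst ≫ biprod.fst) (biprod.snd ≫ biprod.snd)) = d A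
  dc6 : ∀ A : C, d A ≫ d (A ⊞ A) ≫
      S.map (biprod.lift
        (biprod.lift (biprod.fst ≫ biprod.fst) (biprod.snd ≫ biprod.fst))
        (biprod.lift (biprod.fst ≫ biprod.snd) (biprod.snd ≫ biprod.snd))) =
      d A ≫ d (A ⊞ A)

/-- `λ_A := ⟨S(π₁), S(π₁+π₄) ∘ ∂_{A×A}⟩ : S(A×A) ⟶ S(A) × S(A)`. -/
noncomputable def lamOf (S : Monad C) (p : DiffCombTrans S) (A : C) :
    S.obj (A ⊞ A) ⟶ S.obj A ⊞ S.obj A :=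
  biprod.lift (S.map biprod.fst)
    (p.d (A ⊞ A) ≫ S.map (biprod.fst ≫ biprod.fst + biprod.snd ≫ biprod.snd))

/-- the canonical flip `⟨π₁,π₃,π₂,π₄⟩ : (X × X) × (X × X) ⟶ (X × X) × (X × X)`. -/
noncomputable def canFlip (X : C) : (X ⊞ X) ⊞ (X ⊞ X) ⟶ (X ⊞ X) ⊞ (X ⊞ X) :=
  biprod.lift (biprod.lift (biprod.fst ≫ biprod.fst) (biprod.snd ≫ biprod.fst))
    (biprod.lift (biprod.fst ≫ biprod.snd) (biprod.snd ≫ biprod.snd))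

/-- `λ` is compatible with the canonical flip of the biproduct tangent structure:
`⟨π₁,π₃,π₂,π₄⟩ ∘ (λ_A × λ_A) ∘ λ_{A×A} = (λ_A × λ_A) ∘ λ_{A×A} ∘ S(⟨π₁,π₃,π₂,π₄⟩)`. -/
theorem lamOf_canFlip (S : Monad C) (p : DiffCombTrans S) (A : C) :
    lamOf S p (A ⊞ A) ≫ biprod.map (lamOf S p A) (lamOf S p A) ≫ canFlip (S.obj A) =
      S.map (canFlip A) ≫ lamOf S p (A ⊞ A) ≫
        biprod.map (lamOf S p A) (lamOf S p A) := by
  have nat2 : ∀ {X Y Z : C} (f : X ⟶ Y) (g : Y ⊞ Y ⟶ Z), S.map f ≫ p.d Y ≫ S.map g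
      = p.d X ≫ S.map (biprod.map f f ≫ g) := by
    intro X Y Z f g
    rw [← Category.assoc, p.natural, Category.assoc, ← S.map_comp]
  apply biprod.hom_ext <;> apply biprod.hom_ext <;>
    simp only [lamOf, canFlip, Category.assoc, biprod.lift_fst, biprod.lift_snd,
      biprod.lift_fst_assoc, biprod.lift_snd_assoc, biprod.map_fst, biprod.map_snd,
      biprod.map_fst_assoc, biprod.map_snd_assoc]
  -- goal (1,1)
  · rw [← S.map_comp, ← S.map_comp]
    congr 1
    simp
  -- goal (1,2)
  · rw [← S.map_comp_assoc, nat2, ← S.map_comp]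
    congr 1
    simp [Preadditive.comp_add]
  -- goal (2,1)
  · rw [nat2, ← S.map_comp, nat2]
    congr 1
    simp [Preadditive.comp_add]
  -- goal (2,2)
  · rw [nat2]
    have hc := reassoc_of% (p.natural
      (biprod.lift (biprod.lift (biprod.fst ≫ biprod.fst) (biprod.snd ≫ biprod.fst))
        (biprod.lift (biprod.fst ≫ biprod.snd) (biprod.snd ≫ biprod.snd)) :
        (A ⊞ A) ⊞ (A ⊞ A) ⟶ (A ⊞ A) ⊞ (A ⊞ A)))
    rw [hc, nat2]
    have hsw :
        biprod.map
            (biprod.map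
              (biprod.lift (biprod.lift (biprod.fst ≫ biprod.fst) (biprod.snd ≫ biprod.fst))
                (biprod.lift (biprod.fst ≫ biprod.snd) (biprod.snd ≫ biprod.snd)))
              (biprod.lift (biprod.lift (biprod.fst ≫ biprod.fst) (biprod.snd ≫ biprod.fst))
                (biprod.lift (biprod.fst ≫ biprod.snd) (biprod.snd ≫ biprod.snd))))
            (biprod.map
              (biprod.lift (biprod.lift (biprod.fst ≫ biprod.fst) (biprod.snd ≫ biprod.fst))
                (biprod.lift (biprod.fst ≫ biprod.snd) (biprod.snd ≫ biprod.snd)))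
              (biprod.lift (biprod.lift (biprod.fst ≫ biprod.fst) (biprod.snd ≫ biprod.fst))
                (biprod.lift (biprod.fst ≫ biprod.snd) (biprod.snd ≫ biprod.snd)))) ≫
          (biprod.map (biprod.fst ≫ biprod.fst + biprod.snd ≫ biprod.snd)
              (biprod.fst ≫ biprod.fst + biprod.snd ≫ biprod.snd) ≫
            (biprod.fst ≫ biprod.fst + biprod.snd ≫ biprod.snd))
        =
        (biprod.lift (biprod.lift (biprod.fst ≫ biprod.fst) (biprod.snd ≫ biprod.fst))
            (biprod.lift (biprod.fst ≫ biprod.snd) (biprod.snd ≫ biprod.snd)) :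
          (((A ⊞ A) ⊞ (A ⊞ A)) ⊞ ((A ⊞ A) ⊞ (A ⊞ A))) ⊞
              (((A ⊞ A) ⊞ (A ⊞ A)) ⊞ ((A ⊞ A) ⊞ (A ⊞ A))) ⟶ _) ≫
          (biprod.map (biprod.fst ≫ biprod.fst + biprod.snd ≫ biprod.snd)
              (biprod.fst ≫ biprod.fst + biprod.snd ≫ biprod.snd) ≫
            (biprod.fst ≫ biprod.fst + biprod.snd ≫ biprod.snd)) := by
      simp [Preadditive.comp_add, Preadditive.add_comp]
      abel
    rw [hsw]
    conv_rhs => rw [S.map_comp]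
    rw [reassoc_of% (p.dc6 ((A ⊞ A) ⊞ (A ⊞ A)))]
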